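/- If w is a vertex outside N[û] adjacent to two vertices of a triangle {u_1,u_2,u_3} contained in N(û), then the graph contains a gem (H_5) as a subgraph. -/

import Mathlib

open scoped Classical
open SimpleGraph Matrix

def ContainsCopy {α β : Type*} (H : SimpleGraph α) (G : SimpleGraph β) : Prop :=
  ∃ f : α ↪ β, ∀ a b, H.Adj a b → G.Adj (f a) (f b)

def gem : SimpleGraph (Fin 5) :=
  SimpleGraph.fromRel (fun a b => (b.val = a.val + 1 ∧ b.val ≤ 3) ∨ b = 4)

def bookS (k : ℕ) : SimpleGraph (Fin 2 ⊕ Fin k) :=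
  SimpleGraph.fromRel (fun a _ => a.isLeft = true)

def pendantS (s t : ℕ) : SimpleGraph (Fin 2 ⊕ (Fin s ⊕ Fin t)) :=
  SimpleGraph.fromRel (fun a b =>
    match a, b with
    | Sum.inl _, Sum.inl _ => True
    | Sum.inl _, Sum.inr (Sum.inl _) => True
    | Sum.inl i, Sum.inr (Sum.inr _) => i = 0
    | _, _ => False)

def starG (r : ℕ) : SimpleGraph (Fin (r + 1)) :=
  SimpleGraph.fromRel (fun a _ => a = 0)

noncomputable def specRad {V : Type*} [Fintype V] (G : SimpleGraph V) : ℝ :=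
  sSup {μ : ℝ | Module.End.HasEigenvalue (Matrix.mulVecLin (G.adjMatrix ℝ)) μ}

noncomputable def edgeCount {V : Type*} [Fintype V] (G : SimpleGraph V) : ℕ :=
  G.edgeFinset.card

noncomputable def edgesIn {V : Type*} [Fintype V] (G : SimpleGraph V) (S : Finset V) : ℕ :=
  (G.edgeFinset.filter (fun e => ∀ v ∈ e, v ∈ S)).card

noncomputable def N0 {V : Type*} [Fintype V] (G : SimpleGraph V) (u : V) : Finset V :=
  (G.neighborFinset u).filter (fun v => ∀ w ∈ G.neighborFinset u, ¬ G.Adj v w)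

noncomputable def Nplus {V : Type*} [Fintype V] (G : SimpleGraph V) (u : V) : Finset V :=
  G.neighborFinset u \ N0 G u

noncomputable def Wset {V : Type*} [Fintype V] (G : SimpleGraph V) (u : V) : Finset V :=
  Finset.univ \ insert u (G.neighborFinset u)

def InFamily (m : ℕ) {V : Type*} [Fintype V] (G : SimpleGraph V) : Prop :=
  ¬ ContainsCopy gem G ∧ edgeCount G = m ∧ (∀ v : V, ∃ w, G.Adj v w) ∧
    ¬ Nonempty (G ≃g bookS ((m - 1) / 2))

def MaxInFamily (m : ℕ) {V : Type*} [Fintype V] (G : SimpleGraph V) : Prop :=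
  InFamily m G ∧ ∀ (n : ℕ) (H : SimpleGraph (Fin n)), InFamily m H → specRad H ≤ specRad G

def IsCutVertex {V : Type*} (G : SimpleGraph V) (v : V) : Prop :=
  ∃ a b : {x : V // x ≠ v}, G.Reachable a.1 b.1 ∧
    ¬ (G.induce {x : V | x ≠ v}).Reachable a b

lemma mkGem {V : Type*} (G : SimpleGraph V) (a b c d e : V)
    (hab : G.Adj a b) (hbc : G.Adj b c) (hcd : G.Adj c d)
    (hea : G.Adj e a) (heb : G.Adj e b) (hec : G.Adj e c) (hed : G.Adj e d)
    (hac : a ≠ c) (had : a ≠ d) (hbd : b ≠ d) :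
    ContainsCopy gem G := by
  refine ⟨⟨![a, b, c, d, e], ?_⟩, ?_⟩
  · intro x y hxy
    fin_cases x <;> fin_cases y <;>
      simp_all [hab.ne, hbc.ne, hcd.ne, hea.ne, heb.ne, hec.ne, hed.ne,
        hab.ne', hbc.ne', hcd.ne', hea.ne', heb.ne', hec.ne', hed.ne',
        hac, had, hbd, hac.symm, had.symm, hbd.symm]
  · intro x y h
    change G.Adj (![a, b, c, d, e] x) (![a, b, c, d, e] y)
    fin_cases x <;> fin_cases y <;>
      simp_all [gem, hab, hbc, hcd, hea, heb, hec, hed,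
        hab.symm, hbc.symm, hcd.symm, hea.symm, heb.symm, hec.symm, hed.symm] <;> omega

theorem stmt12 {V : Type*} (G : SimpleGraph V) (u w u₁ u₂ u₃ : V)
    (h1 : G.Adj u u₁) (h2 : G.Adj u u₂) (h3 : G.Adj u u₃)
    (h12 : G.Adj u₁ u₂) (h13 : G.Adj u₁ u₃) (h23 : G.Adj u₂ u₃)
    (hwu : ¬ G.Adj u w) (hwne : w ≠ u)
    (hadj : (G.Adj w u₁ ∧ G.Adj w u₂) ∨ (G.Adj w u₁ ∧ G.Adj w u₃) ∨
      (G.Adj w u₂ ∧ G.Adj w u₃)) :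
    ContainsCopy gem G := by
  have key : ∀ ui uj uk : V, G.Adj u ui → G.Adj u uj → G.Adj u uk →
      G.Adj ui uj → G.Adj ui uk → G.Adj uj uk → G.Adj w ui → G.Adj w uj →
      ContainsCopy gem G := by
    intro ui uj uk hui huj huk hij hik hjk hwi hwj
    refine mkGem G w uj uk u ui hwj hjk huk.symm hwi.symm hij hik hui.symm ?_ hwne ?_
    · rintro rfl; exact hwu huk
    · exact fun h => G.irrefl (h ▸ huj)
  rcases hadj with ⟨ha, hb⟩ | ⟨ha, hb⟩ | ⟨ha, hb⟩
  · exact key u₁ u₂ u₃ h1 h2 h3 h12 h13 h23 ha hb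
  · exact key u₁ u₃ u₂ h1 h3 h2 h13 h12 h23.symm ha hb
  · exact key u₂ u₃ u₁ h2 h3 h1 h23 h12.symm h13.symm ha hb
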